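/- Let A ∈ ℂ^{n×n} and let B = [b₁, …, b_d] ∈ ℂ^{n×d} have full column rank, and suppose that A·b_i lies in the column span of B for every i = 1, …, d−1 (a graded Krylov basis). Let S ∈ ℂ^{s×n} be a subspace embedding with distortion ε ∈ (0,1) for the column span of [AB, B]. Let M⋆ = (B*B)⁻¹B*(AB) and M̂ = ((SB)*(SB))⁻¹(SB)*(S(AB)). Then the i-th columns of M̂ and M⋆ coincide for every i = 1, …, d−1; that is, M̂ and M⋆ can differ only in their final column. -/

import Mathlib

open Matrix

noncomputable def nrm2 {n : ℕ} (v : Fin n → ℂ) : ℝ :=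
  ‖(WithLp.equiv 2 (Fin n → ℂ)).symm v‖

lemma nrm2_eq_zero {n : ℕ} {v : Fin n → ℂ} (h : nrm2 v = 0) : v = 0 := by
  unfold nrm2 at h
  rw [norm_eq_zero] at h
  have := congrArg (WithLp.equiv 2 (Fin n → ℂ)) h
  simpa using this

lemma mulVec_inj_of_mulVec_eq_zero {m d : ℕ} {C : Matrix (Fin m) (Fin d) ℂ}
    (h : ∀ x, C.mulVec x = 0 → x = 0) : Function.Injective C.mulVec := by
  have : LinearMap.ker C.mulVecLin = ⊥ := by
    rw [LinearMap.ker_eq_bot']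
    intro x hx
    exact h x hx
  have := LinearMap.ker_eq_bot.mp this
  exact this

open ComplexOrder in
lemma isUnit_gram {m d : ℕ} {C : Matrix (Fin m) (Fin d) ℂ}
    (h : Function.Injective C.mulVec) : IsUnit (Cᴴ * C) := by
  rw [← Matrix.mulVec_injective_iff_isUnit]
  apply mulVec_inj_of_mulVec_eq_zero
  intro x hx
  rw [Matrix.conjTranspose_mul_self_mulVec_eq_zero] at hx
  have := h (a₁ := x) (a₂ := 0) (by simpa using hx)
  exact this

lemma pinv_mulVec {m d : ℕ} {C : Matrix (Fin m) (Fin d) ℂ}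
    (h : Function.Injective C.mulVec) (c : Fin d → ℂ) :
    ((Cᴴ * C)⁻¹ * Cᴴ).mulVec (C.mulVec c) = c := by
  have hu : IsUnit (Cᴴ * C) := isUnit_gram h
  rw [Matrix.mulVec_mulVec, Matrix.mul_assoc,
    Matrix.nonsing_inv_mul _ ((Matrix.isUnit_iff_isUnit_det _).mp hu), Matrix.one_mulVec]

lemma col_mul {m k d : ℕ} (M : Matrix (Fin m) (Fin k) ℂ) (N : Matrix (Fin k) (Fin d) ℂ)
    (i : Fin d) (j : Fin m) : (M * N) j i = M.mulVec (fun t => N t i) j := by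
  simp [Matrix.mul_apply, Matrix.mulVec, dotProduct]

/-- For a graded Krylov basis, the sketched and classic Rayleigh–Ritz matrices
differ at most in their final column. -/
theorem sRR_krylov_columns_agree
    {n d s : ℕ} (A : Matrix (Fin n) (Fin n) ℂ) (B : Matrix (Fin n) (Fin d) ℂ)
    (hB : B.rank = d)
    (hKrylov : ∀ i : Fin d, (i : ℕ) + 1 < d →
      A.mulVec (fun j => B j i) ∈ Submodule.span ℂ (Set.range Bᵀ))
    (S : Matrix (Fin s) (Fin n) ℂ) (ε : ℝ) (hε : ε ∈ Set.Ioo (0 : ℝ) 1)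
    (hS : ∀ v ∈ Submodule.span ℂ (Set.range (A * B)ᵀ ∪ Set.range Bᵀ),
      (1 - ε) * nrm2 v ≤ nrm2 (S.mulVec v) ∧ nrm2 (S.mulVec v) ≤ (1 + ε) * nrm2 v) :
    ∀ i : Fin d, (i : ℕ) + 1 < d → ∀ j : Fin d,
      (((S * B)ᴴ * (S * B))⁻¹ * (S * B)ᴴ * (S * (A * B))) j i =
        ((Bᴴ * B)⁻¹ * Bᴴ * (A * B)) j i := by
  -- B has injective mulVec
  have hBk : LinearMap.ker B.mulVecLin = ⊥ := by
    have h1 : Module.finrank ℂ (LinearMap.range B.mulVecLin)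
        + Module.finrank ℂ (LinearMap.ker B.mulVecLin) = d := by
      simpa using LinearMap.finrank_range_add_finrank_ker B.mulVecLin
    have h2 : Module.finrank ℂ (LinearMap.range B.mulVecLin) = d := hB
    have h3 : Module.finrank ℂ (LinearMap.ker B.mulVecLin) = 0 := by omega
    exact Submodule.finrank_eq_zero.mp h3
  have hBinj : Function.Injective B.mulVec := by
    apply mulVec_inj_of_mulVec_eq_zero
    intro x hx
    have : x ∈ LinearMap.ker B.mulVecLin := by simpa [Matrix.mulVecLin] using hx
    simpa [hBk] using this
  -- S*B has injective mulVec
  have hSBinj : Function.Injective (S * B).mulVec := by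
    apply mulVec_inj_of_mulVec_eq_zero
    intro x hx
    have hmem : B.mulVec x ∈ Submodule.span ℂ (Set.range (A * B)ᵀ ∪ Set.range Bᵀ) := by
      have : B.mulVec x ∈ Submodule.span ℂ (Set.range Bᵀ) := by
        rw [show Set.range Bᵀ = Set.range B.col from rfl, ← Matrix.range_mulVecLin]
        exact ⟨x, rfl⟩
      exact Submodule.span_mono Set.subset_union_right this
    have hle := (hS _ hmem).1
    have hz : S.mulVec (B.mulVec x) = 0 := by
      rw [Matrix.mulVec_mulVec]; exact hx
    rw [hz] at hle
    have h0 : nrm2 (0 : Fin s → ℂ) = 0 := by simp [nrm2]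
    rw [h0] at hle
    have hεpos : 0 < 1 - ε := by linarith [hε.2]
    have hnn : 0 ≤ nrm2 (B.mulVec x) := norm_nonneg _
    have : nrm2 (B.mulVec x) = 0 := by nlinarith
    have hBx0 : B.mulVec x = 0 := nrm2_eq_zero this
    exact hBinj (a₁ := x) (a₂ := 0) (by simpa using hBx0)
  intro i hi j
  obtain ⟨c, hc⟩ : ∃ c, B.mulVec c = A.mulVec (fun t => B t i) := by
    have := hKrylov i hi
    rw [show Set.range Bᵀ = Set.range B.col from rfl, ← Matrix.range_mulVecLin] at this
    exact this
  -- column i of A*B equals B.mulVec c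
  have hcol : (fun t => (A * B) t i) = B.mulVec c := by
    funext t
    rw [col_mul]
    exact congrFun hc.symm t
  have hcolS : (fun t => (S * (A * B)) t i) = (S * B).mulVec c := by
    funext t
    rw [col_mul, ← Matrix.mulVec_mulVec, ← hcol]
  have hR : ((Bᴴ * B)⁻¹ * Bᴴ * (A * B)) j i = c j := by
    rw [col_mul, show (fun t => (A * B) t i) = B.mulVec c from hcol,
      pinv_mulVec hBinj]
  have hL : (((S * B)ᴴ * (S * B))⁻¹ * (S * B)ᴴ * (S * (A * B))) j i = c j := by
    rw [col_mul, show (fun t => (S * (A * B)) t i) = (S * B).mulVec c from hcolS,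
      pinv_mulVec hSBinj]
  rw [hL, hR]
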